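/- arXiv:2508.05180 — 4 statements merged into one kernel-verified Lean document; each statement's English description precedes it below -/
import Mathlib

section
/- Let G be a finite group, let p be a prime, and let P be a Sylow p-subgroup of G. Assume that x, y ∈ P are picky. If x and y are conjugate in G, then x and y are conjugate in the normalizer N_G(P). -/
open CategoryTheory

noncomputable section

/-- The set of irreducible complex characters of a group `G`. -/
def Irr (G : Type) [Group G] : Set (G → ℂ) :=
  {χ | ∃ V : FDRep ℂ G, Simple V ∧ V.character = χ}

/-- The irreducible characters of `G` that do not vanish at `g`. -/
def IrrX (G : Type) [Group G] (g : G) : Set (G → ℂ) :=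
  {χ | χ ∈ Irr G ∧ χ g ≠ 0}

/-- The irreducible characters of `G` of degree not divisible by `p`. -/
def IrrP' (p : ℕ) (G : Type) [Group G] : Set (G → ℂ) :=
  {χ | ∃ V : FDRep ℂ G, Simple V ∧ V.character = χ ∧ ¬ (p ∣ Module.finrank ℂ V)}

/-- The degree of a character, recovered from its value at `1`. -/
def charDeg {G : Type} [Group G] (χ : G → ℂ) : ℕ := ⌊(χ 1).re⌋₊

/-- The `p`-part of a natural number. -/
def pPart (p m : ℕ) : ℕ := p ^ (m.factorization p)

/-- `x` is a picky `p`-element: a `p`-element lying in a unique Sylow `p`-subgroup. -/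
def IsPicky (p : ℕ) {G : Type*} [Group G] (x : G) : Prop :=
  (∃ k, orderOf x = p ^ k) ∧ ∃! Q : Sylow p G, x ∈ Q

/-- `H` is a normal subgroup of `K` (both subgroups of an ambient group `G`). -/
def NormalIn {G : Type*} [Group G] (H K : Subgroup G) : Prop :=
  H ≤ K ∧ ∀ k ∈ K, ∀ h ∈ H, k * h * k⁻¹ ∈ H

/-- `H` is subnormal in `K`: there is a finite chain of subgroups from `H` to `K`,
each normal in the next. -/
def IsSubnormalIn {G : Type*} [Group G] (H K : Subgroup G) : Prop :=
  Relation.ReflTransGen NormalIn H K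

/-- The subnormalizer of `x` in `G`: the subgroup generated by all `g` such that
`⟨x⟩` is subnormal in `⟨x, g⟩`. -/
def subnormalizer {G : Type*} [Group G] (x : G) : Subgroup G :=
  Subgroup.closure {g | IsSubnormalIn (Subgroup.zpowers x) (Subgroup.closure {x, g})}

lemma mem_subnormalizer_self {G : Type*} [Group G] (x : G) : x ∈ subnormalizer x :=
  Subgroup.subset_closure (by
    show IsSubnormalIn (Subgroup.zpowers x) (Subgroup.closure {x, x})
    rw [Set.pair_eq_singleton, ← Subgroup.zpowers_eq_closure]
    exact Relation.ReflTransGen.refl)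

/-- The full cycle type of a permutation of `Fin n`: the multiset of the lengths of
all its cycles, with fixed points counted as cycles of length `1`. -/
def fullCycleType {n : ℕ} (x : Equiv.Perm (Fin n)) : Multiset ℕ :=
  x.cycleType + Multiset.replicate (n - x.support.card) 1

/-- The multiset of cycle lengths of a `p`-adic element of `S_n`: `a_i` cycles of
length `p ^ i`, where `n = Σ a_i p ^ i` is the `p`-adic expansion of `n`. -/
def padicCycleMultiset (p n : ℕ) : Multiset ℕ :=
  ∑ i ∈ Finset.range (Nat.digits p n).length,
    Multiset.replicate ((Nat.digits p n).getD i 0) (p ^ i)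

/-- A `p`-adic element of `S_n`. -/
def IsPAdic (p : ℕ) {n : ℕ} (x : Equiv.Perm (Fin n)) : Prop :=
  fullCycleType x = padicCycleMultiset p n

/-- A picky element of Type II: a `2`-adic element on `n - 2` points together with
two fixed points. -/
def IsTypeII {n : ℕ} (x : Equiv.Perm (Fin n)) : Prop :=
  fullCycleType x = padicCycleMultiset 2 (n - 2) + Multiset.replicate 2 1

/-- A picky element of Type III: a `3`-adic element on `n - 3` points together with
three fixed points. -/
def IsTypeIII {n : ℕ} (x : Equiv.Perm (Fin n)) : Prop :=
  fullCycleType x = padicCycleMultiset 3 (n - 3) + Multiset.replicate 3 1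


/-- Lemma: picky elements of `P` that are conjugate in `G` are already conjugate in
`N_G(P)`. -/
theorem conj_in_normalizer_of_picky {G : Type*} [Group G] [Finite G]
    (p : ℕ) [Fact p.Prime] (P : Sylow p G) (x y : G)
    (hx : x ∈ (P : Subgroup G)) (hy : y ∈ (P : Subgroup G))
    (hpx : IsPicky p x) (hpy : IsPicky p y) (hconj : IsConj x y) :
    ∃ n ∈ Subgroup.normalizer ((P : Subgroup G) : Set G), n * x * n⁻¹ = y := by
  obtain ⟨g, hg⟩ := isConj_iff.mp hconj
  refine ⟨g, ?_, hg⟩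
  refine (Sylow.smul_eq_iff_mem_normalizer (P := P)).mp ?_
  obtain ⟨Q, hQ, huniq⟩ := hpy.2
  have h1 : y ∈ (g • P : Sylow p G) := by
    subst hg
    show g * x * g⁻¹ ∈ (g • P : Sylow p G).1
    rw [Sylow.coe_subgroup_smul]
    exact Subgroup.smul_mem_pointwise_smul x (MulAut.conj g) P hx
  rw [huniq _ h1, huniq _ hy]

end
end

section
/- Let p be a prime and let G = H_1 × ⋯ × H_r be a direct product of finite groups. Then a p-element g = (g_1, …, g_r) ∈ G is picky in G if and only if for every i the component g_i is picky in H_i. -/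
open CategoryTheory

noncomputable section

set_option linter.unusedSectionVars false


section PiSylow

variable {p : ℕ} [Fact p.Prime] {r : ℕ} {H : Fin r → Type*} [∀ i, Group (H i)]

lemma aux_isPGroup_pi {Q : ∀ i, Subgroup (H i)} (hQ : ∀ i, IsPGroup p (Q i)) :
    IsPGroup p (Subgroup.pi Set.univ Q) := by
  rintro ⟨g, hg⟩
  choose k hk using fun i => hQ i ⟨g i, hg i (Set.mem_univ i)⟩
  refine ⟨Finset.univ.sup k, ?_⟩
  apply Subtype.ext
  show g ^ p ^ Finset.univ.sup k = 1
  funext i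
  have h1 : (g i) ^ p ^ k i = 1 := congrArg Subtype.val (hk i)
  have h2 : orderOf (g i) ∣ p ^ Finset.univ.sup k :=
    (orderOf_dvd_of_pow_eq_one h1).trans
      (pow_dvd_pow p (Finset.le_sup (Finset.mem_univ i)))
  calc (g ^ p ^ Finset.univ.sup k) i = (g i) ^ p ^ Finset.univ.sup k := rfl
    _ = 1 := orderOf_dvd_iff_pow_eq_one.mp h2

lemma aux_max {Q : ∀ i, Sylow p (H i)} {R : Subgroup (∀ i, H i)} (hR : IsPGroup p R)
    (hle : Subgroup.pi Set.univ (fun i => (Q i : Subgroup (H i))) ≤ R) :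
    R = Subgroup.pi Set.univ (fun i => (Q i : Subgroup (H i))) := by
  have hmap : ∀ i, R.map (Pi.evalMonoidHom H i) = Q i := by
    intro i
    apply (Q i).is_maximal' (hR.map _)
    intro x hx
    refine ⟨Pi.mulSingle i x, hle ((Subgroup.mulSingle_mem_pi i x).mpr fun _ => hx), ?_⟩
    simp [Pi.evalMonoidHom]
  refine le_antisymm (fun x hx i _ => ?_) hle
  show x i ∈ (Q i : Subgroup (H i))
  rw [← hmap i]
  exact ⟨x, hx, rfl⟩

/-- The product of Sylow subgroups as a Sylow subgroup of the product. -/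
def sylowPi (Q : ∀ i, Sylow p (H i)) : Sylow p (∀ i, H i) where
  toSubgroup := Subgroup.pi Set.univ fun i => (Q i : Subgroup (H i))
  isPGroup' := aux_isPGroup_pi fun i => (Q i).2
  is_maximal' := fun h hle => aux_max h hle

lemma sylow_eq_pi (P : Sylow p (∀ i, H i)) :
    ∃ Q : ∀ i, Sylow p (H i),
      (P : Subgroup (∀ i, H i)) = Subgroup.pi Set.univ fun i => (Q i : Subgroup (H i)) := by
  choose Q hQ using fun i => (P.2.map (Pi.evalMonoidHom H i)).exists_le_sylow
  refine ⟨Q, ?_⟩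
  have h1 : (P : Subgroup (∀ i, H i)) ≤ Subgroup.pi Set.univ fun i => (Q i : Subgroup (H i)) :=
    fun x hx i _ => hQ i ⟨x, hx, rfl⟩
  exact (P.is_maximal' (aux_isPGroup_pi fun i => (Q i).2) h1).symm

lemma pi_component_eq {Q Q' : ∀ i, Subgroup (H i)}
    (h : Subgroup.pi Set.univ Q = Subgroup.pi Set.univ Q') (i : Fin r) : Q i = Q' i := by
  ext x
  constructor <;> intro hx
  · have := (Subgroup.mulSingle_mem_pi (I := Set.univ) i x).mpr fun _ => hx
    rw [h] at this
    exact (Subgroup.mulSingle_mem_pi i x).mp this (Set.mem_univ i)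
  · have := (Subgroup.mulSingle_mem_pi (I := Set.univ) i x).mpr fun _ => hx
    rw [← h] at this
    exact (Subgroup.mulSingle_mem_pi i x).mp this (Set.mem_univ i)

end PiSylow

theorem picky_pi_iff' (p : ℕ) [Fact p.Prime] (r : ℕ) (H : Fin r → Type*)
    [∀ i, Group (H i)] [∀ i, Finite (H i)]
    (g : ∀ i, H i) (hg : ∃ k, orderOf g = p ^ k) :
    ((∃ k, orderOf g = p ^ k) ∧ ∃! Q : Sylow p (∀ i, H i), g ∈ Q) ↔
      ∀ i, (∃ k, orderOf (g i) = p ^ k) ∧ ∃! Q : Sylow p (H i), g i ∈ Q := by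
  obtain ⟨k, hk⟩ := hg
  have hgj : ∀ j, ∃ m, orderOf (g j) = p ^ m := by
    intro j
    have h1 : (g j) ^ p ^ k = 1 := by
      have : g ^ p ^ k = 1 := by rw [← hk]; exact pow_orderOf_eq_one g
      exact congrFun this j
    obtain ⟨m, -, hm⟩ := (Nat.dvd_prime_pow Fact.out).mp (orderOf_dvd_of_pow_eq_one h1)
    exact ⟨m, hm⟩
  have hSex : ∀ j, ∃ S : Sylow p (H j), g j ∈ S := by
    intro j
    obtain ⟨m, hm⟩ := hgj j
    obtain ⟨S, hS⟩ := (IsPGroup.of_card ((Nat.card_zpowers (g j)).trans hm)).exists_le_sylow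
    exact ⟨S, hS (Subgroup.mem_zpowers _)⟩
  constructor
  · rintro ⟨-, P, hgP, hP⟩ i
    refine ⟨hgj i, ?_⟩
    choose S hS using hSex
    refine ⟨S i, hS i, fun T hT => ?_⟩
    classical
    have hmem : ∀ (U : ∀ j, Sylow p (H j)), (∀ j, g j ∈ U j) → g ∈ sylowPi U :=
      fun U hU j _ => hU j
    have h1 : sylowPi (Function.update S i T) = sylowPi S := by
      rw [hP _ (hmem _ fun j => ?_), hP _ (hmem _ hS)]
      by_cases hj : j = i
      · subst hj; simpa using hT
      · simpa [Function.update_of_ne hj] using hS j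
    have h2 := pi_component_eq (Sylow.ext_iff.mp h1) i
    simp only [Function.update_self] at h2
    exact Sylow.ext h2
  · intro h
    refine ⟨⟨k, hk⟩, ?_⟩
    choose Q hQ hQu using fun i => (h i).2
    refine ⟨sylowPi Q, fun i _ => hQ i, fun P hgP => ?_⟩
    obtain ⟨S, hS⟩ := sylow_eq_pi P
    have hgS : ∀ i, g i ∈ S i := by
      intro i
      have : g ∈ Subgroup.pi Set.univ fun j => (S j : Subgroup (H j)) := hS ▸ hgP
      exact this i (Set.mem_univ i)
    apply Sylow.ext
    rw [hS]
    show _ = Subgroup.pi Set.univ fun i => (Q i : Subgroup (H i))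
    congr 1
    funext i
    rw [hQu i (S i) (hgS i)]


/-- A `p`-element of a direct product `G = H_1 × ⋯ × H_r` is picky if and only if
each of its components is picky. -/
theorem picky_pi_iff (p : ℕ) [Fact p.Prime] (r : ℕ) (H : Fin r → Type*)
    [∀ i, Group (H i)] [∀ i, Finite (H i)]
    (g : ∀ i, H i) (hg : ∃ k, orderOf g = p ^ k) :
    IsPicky p g ↔ ∀ i, IsPicky p (g i) :=
  picky_pi_iff' p r H g hg

end
end

section
/- Let G = H × K be a direct product of finite groups, let x ∈ H and y ∈ K. Then Sub_H(x) × Sub_K(y) ≤ Sub_G((x, y)), i.e., the direct product of the two subnormalizers, viewed as a subgroup of H × K, is contained in the subnormalizer of (x, y) in G. -/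
open CategoryTheory

noncomputable section

lemma keyL {H K : Type*} [Group H] [Group K] (x : H) (y : K) {g : H}
    (hg : IsSubnormalIn (Subgroup.zpowers x) (Subgroup.closure {x, g})) :
    IsSubnormalIn (Subgroup.zpowers (x, y)) (Subgroup.closure {(x, y), (g, 1)}) := by
  set L := Subgroup.closure ({(x, y), (g, 1)} : Set (H × K)) with hLdef
  set Z := Subgroup.zpowers y with hZdef
  have hL : L ≤ (Subgroup.closure {x, g}).prod Z := by
    rw [hLdef, Subgroup.closure_le]
    rintro p (rfl | rfl)
    · exact ⟨Subgroup.subset_closure (Set.mem_insert _ _), Subgroup.mem_zpowers y⟩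
    · exact ⟨Subgroup.subset_closure (Set.mem_insert_of_mem _ rfl), one_mem Z⟩
  have hchain : IsSubnormalIn (L ⊓ (Subgroup.zpowers x).prod Z)
      (L ⊓ (Subgroup.closure {x, g}).prod Z) := by
    refine Relation.ReflTransGen.lift (fun A : Subgroup H => L ⊓ A.prod Z) (fun A A' hAA' => ?_) _ _ hg
    obtain ⟨hle, hnorm⟩ := hAA'
    refine ⟨inf_le_inf_left _ (Subgroup.prod_mono hle le_rfl), ?_⟩
    intro k hk h hh
    rw [Subgroup.mem_inf, Subgroup.mem_prod] at hk hh ⊢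
    exact ⟨mul_mem (mul_mem hk.1 hh.1) (inv_mem hk.1),
      hnorm k.1 hk.2.1 h.1 hh.2.1, mul_mem (mul_mem hk.2.2 hh.2.2) (inv_mem hk.2.2)⟩
  have htop : L ⊓ (Subgroup.closure {x, g}).prod Z = L := inf_eq_left.mpr hL
  rw [htop] at hchain
  refine Relation.ReflTransGen.head ?_ hchain
  constructor
  · rintro p ⟨n, rfl⟩
    exact ⟨Subgroup.zpow_mem L (Subgroup.subset_closure (Set.mem_insert _ _)) n,
      ⟨n, rfl⟩, ⟨n, rfl⟩⟩
  · intro k hk h hh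
    rw [Subgroup.mem_inf, Subgroup.mem_prod] at hk
    obtain ⟨a, ha⟩ := hk.2.1
    obtain ⟨b, hb⟩ := hk.2.2
    obtain ⟨n, rfl⟩ := hh
    have heq : k * (x, y) ^ n * k⁻¹ = (x, y) ^ n := by
      have h1 : k.1 * x ^ n * k.1⁻¹ = x ^ n := by rw [← ha]; group
      have h2 : k.2 * y ^ n * k.2⁻¹ = y ^ n := by rw [← hb]; group
      exact Prod.ext h1 h2
    rw [heq]
    exact ⟨n, rfl⟩

lemma keyR {H K : Type*} [Group H] [Group K] (x : H) (y : K) {g : K}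
    (hg : IsSubnormalIn (Subgroup.zpowers y) (Subgroup.closure {y, g})) :
    IsSubnormalIn (Subgroup.zpowers (x, y)) (Subgroup.closure {(x, y), (1, g)}) := by
  set L := Subgroup.closure ({(x, y), (1, g)} : Set (H × K)) with hLdef
  set Z := Subgroup.zpowers x with hZdef
  have hL : L ≤ Z.prod (Subgroup.closure {y, g}) := by
    rw [hLdef, Subgroup.closure_le]
    rintro p (rfl | rfl)
    · exact ⟨Subgroup.mem_zpowers x, Subgroup.subset_closure (Set.mem_insert _ _)⟩
    · exact ⟨one_mem Z, Subgroup.subset_closure (Set.mem_insert_of_mem _ rfl)⟩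
  have hchain : IsSubnormalIn (L ⊓ Z.prod (Subgroup.zpowers y))
      (L ⊓ Z.prod (Subgroup.closure {y, g})) := by
    refine Relation.ReflTransGen.lift (fun A : Subgroup K => L ⊓ Z.prod A) (fun A A' hAA' => ?_) _ _ hg
    obtain ⟨hle, hnorm⟩ := hAA'
    refine ⟨inf_le_inf_left _ (Subgroup.prod_mono le_rfl hle), ?_⟩
    intro k hk h hh
    rw [Subgroup.mem_inf, Subgroup.mem_prod] at hk hh ⊢
    exact ⟨mul_mem (mul_mem hk.1 hh.1) (inv_mem hk.1),
      mul_mem (mul_mem hk.2.1 hh.2.1) (inv_mem hk.2.1), hnorm k.2 hk.2.2 h.2 hh.2.2⟩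
  have htop : L ⊓ Z.prod (Subgroup.closure {y, g}) = L := inf_eq_left.mpr hL
  rw [htop] at hchain
  refine Relation.ReflTransGen.head ?_ hchain
  constructor
  · rintro p ⟨n, rfl⟩
    exact ⟨Subgroup.zpow_mem L (Subgroup.subset_closure (Set.mem_insert _ _)) n,
      ⟨n, rfl⟩, ⟨n, rfl⟩⟩
  · intro k hk h hh
    rw [Subgroup.mem_inf, Subgroup.mem_prod] at hk
    obtain ⟨a, ha⟩ := hk.2.1
    obtain ⟨b, hb⟩ := hk.2.2
    obtain ⟨n, rfl⟩ := hh
    have heq : k * (x, y) ^ n * k⁻¹ = (x, y) ^ n := by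
      have h1 : k.1 * x ^ n * k.1⁻¹ = x ^ n := by rw [← ha]; group
      have h2 : k.2 * y ^ n * k.2⁻¹ = y ^ n := by rw [← hb]; group
      exact Prod.ext h1 h2
    rw [heq]
    exact ⟨n, rfl⟩

/-- `Sub_H(x) × Sub_K(y) ≤ Sub_{H × K}((x, y))`. -/
theorem subnormalizer_prod_le {H K : Type*} [Group H] [Group K] [Finite H] [Finite K]
    (x : H) (y : K) :
    (subnormalizer x).prod (subnormalizer y) ≤ subnormalizer (x, y) := by
  rintro ⟨a, b⟩ hab
  rw [Subgroup.mem_prod] at hab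
  have hLeft : ∀ a : H, a ∈ subnormalizer x → ((a, 1) : H × K) ∈ subnormalizer (x, y) := by
    intro a ha
    refine Subgroup.closure_induction (fun g hg => ?_) ?_ ?_ ?_ ha
    · exact Subgroup.subset_closure (keyL x y hg)
    · exact one_mem (subnormalizer ((x, y) : H × K))
    · intro u v _ _ hu hv
      have : ((u * v, 1) : H × K) = (u, 1) * (v, 1) := by simp
      rw [this]; exact mul_mem hu hv
    · intro u _ hu
      have : ((u⁻¹, 1) : H × K) = (u, 1)⁻¹ := by simp
      rw [this]; exact inv_mem hu
  have hRight : ∀ b : K, b ∈ subnormalizer y → ((1, b) : H × K) ∈ subnormalizer (x, y) := by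
    intro b hb
    refine Subgroup.closure_induction (fun g hg => ?_) ?_ ?_ ?_ hb
    · exact Subgroup.subset_closure (keyR x y hg)
    · exact one_mem (subnormalizer ((x, y) : H × K))
    · intro u v _ _ hu hv
      have : ((1, u * v) : H × K) = (1, u) * (1, v) := by simp
      rw [this]; exact mul_mem hu hv
    · intro u _ hu
      have : ((1, u⁻¹) : H × K) = (1, u)⁻¹ := by simp
      rw [this]; exact inv_mem hu
  have : ((a, b) : H × K) = (a, 1) * (1, b) := by simp
  rw [this]
  exact mul_mem (hLeft a hab.1) (hRight b hab.2)


end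
end

section
/- Let p be a prime, let n be a positive integer, let x ∈ S_n be a picky p-element, and let P be the unique Sylow p-subgroup of S_n containing x. If H = S_n or H = N_{S_n}(P), then χ(x) is a rational integer for every χ ∈ Irr(H). -/
open CategoryTheory

noncomputable section

section Aux
open Finset Module LinearMap Set


lemma moebius_sum_divisors (n : ℕ) :
    ∑ d ∈ n.divisors, ArithmeticFunction.moebius d = if n = 1 then 1 else 0 := by
  rw [← ArithmeticFunction.coe_mul_zeta_apply, ArithmeticFunction.moebius_mul_coe_zeta,
    ArithmeticFunction.one_apply]

lemma ramanujan_int (m : ℕ) (hm : 0 < m) (ζ : ℂ) (hζ : ζ ^ m = 1) :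
    ∃ z : ℤ, ∑ k ∈ (Finset.range m).filter (fun k => Nat.Coprime k m), ζ ^ k = (z : ℂ) := by
  have hdiv : ∀ d, d ∣ m → d ≠ 0 →
      (∑ k ∈ Finset.range m, if d ∣ k then ζ ^ k else 0)
        = ∑ j ∈ Finset.range (m / d), (ζ ^ d) ^ j := by
    intro d hdm hd0
    rw [← Finset.sum_filter]
    refine Finset.sum_nbij' (fun k => k / d) (fun j => d * j) ?_ ?_ ?_ ?_ ?_
    · intro k hk
      simp only [Finset.mem_filter, Finset.mem_range] at hk
      exact Finset.mem_range.mpr (Nat.div_lt_div_of_lt_of_dvd hdm hk.1)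
    · intro j hj
      simp only [Finset.mem_range] at hj
      refine Finset.mem_filter.mpr ⟨Finset.mem_range.mpr ?_, Dvd.intro j rfl⟩
      calc d * j < d * (m / d) := by
            exact (Nat.mul_lt_mul_left (Nat.pos_of_ne_zero hd0)).mpr hj
        _ = m := Nat.mul_div_cancel' hdm
    · intro k hk
      simp only [Finset.mem_filter] at hk
      exact Nat.mul_div_cancel' hk.2
    · intro j hj
      exact Nat.mul_div_cancel_left j (Nat.pos_of_ne_zero hd0)
    · intro k hk
      simp only [Finset.mem_filter] at hk
      rw [← pow_mul, Nat.mul_div_cancel' hk.2]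
  refine ⟨∑ d ∈ m.divisors,
    ArithmeticFunction.moebius d * (if ζ ^ d = 1 then ((m / d : ℕ) : ℤ) else 0), ?_⟩
  have key : ∀ k, (if Nat.Coprime k m then ζ ^ k else 0)
      = ∑ d ∈ m.divisors, if d ∣ k then (ArithmeticFunction.moebius d : ℂ) * ζ ^ k else 0 := by
    intro k
    have h1 : (if Nat.Coprime k m then (1 : ℂ) else 0)
        = ((∑ d ∈ (Nat.gcd k m).divisors, ArithmeticFunction.moebius d : ℤ) : ℂ) := by
      rw [moebius_sum_divisors]
      by_cases h : Nat.Coprime k m <;> simp [h, Nat.Coprime] at * <;> simp [h]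
    have h2 : (Nat.gcd k m).divisors = m.divisors.filter (· ∣ k) := by
      ext d
      simp only [Nat.mem_divisors, mem_filter, Nat.dvd_gcd_iff]
      constructor
      · rintro ⟨⟨h1', h2'⟩, -⟩; exact ⟨⟨h2', hm.ne'⟩, h1'⟩
      · rintro ⟨⟨h1', h2'⟩, h3⟩
        exact ⟨⟨h3, h1'⟩, fun hg => hm.ne' (Nat.eq_zero_of_gcd_eq_zero_right hg)⟩
    calc (if Nat.Coprime k m then ζ ^ k else 0)
        = (if Nat.Coprime k m then (1:ℂ) else 0) * ζ ^ k := by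
          by_cases h : Nat.Coprime k m <;> simp [h]
      _ = ∑ d ∈ (Nat.gcd k m).divisors, (ArithmeticFunction.moebius d : ℂ) * ζ ^ k := by
          rw [h1, Int.cast_sum, Finset.sum_mul]
      _ = ∑ d ∈ m.divisors, if d ∣ k then (ArithmeticFunction.moebius d : ℂ) * ζ ^ k else 0 := by
          rw [h2, Finset.sum_filter]
  rw [Finset.sum_filter]
  simp_rw [key]
  rw [Finset.sum_comm, Int.cast_sum]
  refine Finset.sum_congr rfl ?_
  intro d hd
  obtain ⟨hdm, hm0⟩ := Nat.mem_divisors.mp hd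
  have hd0 : d ≠ 0 := by rintro rfl; exact hm.ne' ((Nat.zero_dvd).mp hdm)
  have : (∑ k ∈ Finset.range m, if d ∣ k then (ArithmeticFunction.moebius d : ℂ) * ζ ^ k else 0)
      = (ArithmeticFunction.moebius d : ℂ) * ∑ k ∈ Finset.range m, if d ∣ k then ζ ^ k else 0 := by
    rw [Finset.mul_sum]
    refine Finset.sum_congr rfl fun k _ => ?_
    by_cases h : d ∣ k <;> simp [h]
  rw [this, hdiv d hdm hd0]
  by_cases hzd : ζ ^ d = 1
  · simp only [hzd, one_pow, Finset.sum_const, Finset.card_range, nsmul_eq_mul, mul_one]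
    rw [if_pos trivial, Int.cast_mul, Int.cast_natCast]
  · rw [geom_sum_eq hzd, ← pow_mul, Nat.mul_div_cancel' hdm, hζ, if_neg hzd]
    simp

variable {V : Type*} [AddCommGroup V] [Module ℂ V] [FiniteDimensional ℂ V]



lemma trace_restrict_pow (f : Module.End ℂ V) (μ : ℂ) (k : ℕ)
    (hk : MapsTo (f ^ k) (f.maxGenEigenspace μ) (f.maxGenEigenspace μ)) :
    LinearMap.trace ℂ (f.maxGenEigenspace μ) ((f ^ k).restrict hk)
      = μ ^ k * (Module.finrank ℂ (f.maxGenEigenspace μ) : ℂ) := by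
  classical
  set W := f.maxGenEigenspace μ with hWdef
  have hW : MapsTo f W W := Module.End.mapsTo_maxGenEigenspace_of_comm (Commute.refl f) μ
  set g : Module.End ℂ W := f.restrict hW with hg
  have hrestrict : (f ^ k).restrict hk = g ^ k := by
    rw [hg, Module.End.pow_restrict k hW]
  have hNmapsTo : MapsTo (f - algebraMap ℂ (Module.End ℂ V) μ) W W :=
    Module.End.mapsTo_maxGenEigenspace_of_comm
      (Algebra.mul_sub_algebraMap_commutes f μ) μ
  set N : Module.End ℂ W := (f - algebraMap ℂ (Module.End ℂ V) μ).restrict hNmapsTo with hNdef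
  have hN : IsNilpotent N :=
    Module.End.isNilpotent_restrict_maxGenEigenspace_sub_algebraMap f μ hNmapsTo
  have hgN : g = algebraMap ℂ (Module.End ℂ W) μ + N := by
    ext w
    simp only [LinearMap.add_apply, Module.algebraMap_end_apply, hNdef, hg]
    simp only [Submodule.coe_add, SetLike.val_smul, LinearMap.restrict_coe_apply,
      LinearMap.sub_apply, Module.algebraMap_end_apply]
    change f (w : V) = μ • (w : V) + (f - algebraMap ℂ (Module.End ℂ V) μ) (w : V)
    rw [LinearMap.sub_apply, Module.algebraMap_end_apply]
    abel
  have hcomm : Commute (algebraMap ℂ (Module.End ℂ W) μ) N :=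
    Algebra.commute_algebraMap_left μ N
  rw [hrestrict, hgN, hcomm.add_pow]
  rw [map_sum]
  have hterm : ∀ i ∈ Finset.range (k + 1),
      LinearMap.trace ℂ W ((algebraMap ℂ (Module.End ℂ W) μ) ^ i * N ^ (k - i)
        * (Nat.choose k i : Module.End ℂ W))
      = if i = k then μ ^ k * (Module.finrank ℂ W : ℂ) else 0 := by
    intro i hi
    have hrw : (algebraMap ℂ (Module.End ℂ W) μ) ^ i * N ^ (k - i)
        * (Nat.choose k i : Module.End ℂ W)
        = (μ ^ i * (Nat.choose k i : ℂ)) • (N ^ (k - i)) := by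
      rw [← map_pow, ← map_natCast (algebraMap ℂ (Module.End ℂ W)) (Nat.choose k i),
        mul_assoc, ← Algebra.commutes ((Nat.choose k i : ℂ)) (N ^ (k - i)), ← mul_assoc,
        ← map_mul, Algebra.smul_def]
    rw [hrw, map_smul, smul_eq_mul]
    by_cases hik : i = k
    · subst hik
      simp [LinearMap.trace_one]
    · have hki : 1 ≤ k - i := by
        have := Finset.mem_range.mp hi
        omega
      have hNn : IsNilpotent (N ^ (k - i)) := by
        obtain ⟨r, hr⟩ := hN
        exact ⟨r, by rw [← pow_mul, mul_comm, pow_mul, hr, zero_pow (by omega)]⟩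
      have := (LinearMap.isNilpotent_trace_of_isNilpotent hNn).eq_zero
      rw [this, mul_zero, if_neg hik]
  rw [Finset.sum_congr rfl hterm, Finset.sum_ite_eq' (Finset.range (k + 1)) k
    (fun _ => μ ^ k * (Module.finrank ℂ W : ℂ))]
  simp
  exact Or.inl rfl


lemma trace_int_of_conj_pow (f : Module.End ℂ V) (m : ℕ) (hm : 0 < m) (hfm : f ^ m = 1)
    (hc : ∀ k : ℕ, Nat.Coprime k m → LinearMap.trace ℂ V (f ^ k) = LinearMap.trace ℂ V f) :
    ∃ z : ℤ, LinearMap.trace ℂ V f = (z : ℂ) := by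
  classical
  have hind := f.independent_maxGenEigenspace
  have hfin : {μ : ℂ | f.maxGenEigenspace μ ≠ ⊥}.Finite :=
    WellFoundedGT.finite_ne_bot_of_iSupIndep hind
  have hint : DirectSum.IsInternal f.maxGenEigenspace :=
    DirectSum.isInternal_submodule_of_iSupIndep_of_iSup_eq_top hind
      f.iSup_maxGenEigenspace_eq_top
  have htr : ∀ k : ℕ, LinearMap.trace ℂ V (f ^ k)
      = ∑ μ ∈ hfin.toFinset, μ ^ k * (Module.finrank ℂ (f.maxGenEigenspace μ) : ℂ) := by
    intro k
    rw [LinearMap.trace_eq_sum_trace_restrict' hint hfin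
      (fun μ => Module.End.mapsTo_maxGenEigenspace_of_comm ((Commute.refl f).pow_right k) μ)]
    exact Finset.sum_congr rfl fun μ _ => trace_restrict_pow f μ k _
  have hroot : ∀ μ ∈ hfin.toFinset, μ ^ m = 1 := by
    intro μ hμ
    have hne : f.maxGenEigenspace μ ≠ ⊥ := by simpa using hμ
    have h1 : f.HasUnifEigenvalue μ ⊤ := hne
    have h2 : f.HasUnifEigenvalue μ 1 := h1.lt zero_lt_one
    have h3 : (f ^ m).HasUnifEigenvalue (μ ^ m) 1 := h2.pow m
    rw [hfm] at h3
    obtain ⟨v, hv⟩ := h3.exists_hasUnifEigenvector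
    have hveq : v = μ ^ m • v := by
      have := hv.apply_eq_smul
      simpa using this
    have : (1 - μ ^ m) • v = 0 := by
      rw [sub_smul, one_smul, ← hveq, sub_self]
    have hc0 : (1 : ℂ) - μ ^ m = 0 := by
      rcases smul_eq_zero.mp this with h | h
      · exact h
      · exact absurd h hv.2
    exact (sub_eq_zero.mp hc0).symm
  set t := LinearMap.trace ℂ V f with ht
  have ht1 : t = ∑ μ ∈ hfin.toFinset,
      μ * (Module.finrank ℂ (f.maxGenEigenspace μ) : ℂ) := by
    have h1 := htr 1
    simpa [pow_one] using h1
  have hcard : ((Finset.range m).filter (fun k => Nat.Coprime k m)).card = m.totient := by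
    rw [Nat.totient]
    congr 1
    apply Finset.filter_congr
    intro k _
    simp [Nat.coprime_comm]
  have hphit : (m.totient : ℂ) * t = ∑ μ ∈ hfin.toFinset,
      (Module.finrank ℂ (f.maxGenEigenspace μ) : ℂ) *
        ∑ k ∈ (Finset.range m).filter (fun k => Nat.Coprime k m), μ ^ k := by
    calc (m.totient : ℂ) * t
        = ∑ _k ∈ (Finset.range m).filter (fun k => Nat.Coprime k m), t := by
          rw [Finset.sum_const, hcard, nsmul_eq_mul]
      _ = ∑ k ∈ (Finset.range m).filter (fun k => Nat.Coprime k m),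
            ∑ μ ∈ hfin.toFinset,
              μ ^ k * (Module.finrank ℂ (f.maxGenEigenspace μ) : ℂ) := by
          refine Finset.sum_congr rfl fun k hk => ?_
          obtain ⟨-, hk2⟩ := Finset.mem_filter.mp hk
          exact (hc k hk2).symm.trans (htr k)
      _ = ∑ μ ∈ hfin.toFinset,
            ∑ k ∈ (Finset.range m).filter (fun k => Nat.Coprime k m),
              μ ^ k * (Module.finrank ℂ (f.maxGenEigenspace μ) : ℂ) := Finset.sum_comm
      _ = ∑ μ ∈ hfin.toFinset,
          (Module.finrank ℂ (f.maxGenEigenspace μ) : ℂ) *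
            ∑ k ∈ (Finset.range m).filter (fun k => Nat.Coprime k m), μ ^ k := by
          refine Finset.sum_congr rfl fun μ _ => ?_
          rw [Finset.mul_sum]
          exact Finset.sum_congr rfl fun k _ => mul_comm _ _
  choose zf hzf using fun (μ : ℂ) (h : μ ∈ hfin.toFinset) => ramanujan_int m hm μ (hroot μ h)
  set Z : ℤ := ∑ μ ∈ hfin.toFinset.attach,
    (Module.finrank ℂ (f.maxGenEigenspace μ.1) : ℤ) * zf μ.1 μ.2 with hZ
  have key : (m.totient : ℂ) * t = (Z : ℂ) := by
    rw [hphit, ← Finset.sum_attach hfin.toFinset, hZ]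
    push_cast
    refine Finset.sum_congr rfl fun μ _ => ?_
    rw [hzf μ.1 μ.2]
  have hϕpos : 0 < m.totient := Nat.totient_pos.mpr hm
  have hϕ : (m.totient : ℂ) ≠ 0 := Nat.cast_ne_zero.mpr hϕpos.ne'
  set q : ℚ := (Z : ℚ) / (m.totient : ℚ) with hqdef
  have hϕq : (m.totient : ℚ) ≠ 0 := Nat.cast_ne_zero.mpr hϕpos.ne'
  have htq : t = (q : ℂ) := by
    have : (q : ℂ) = (Z : ℂ) / (m.totient : ℂ) := by
      rw [hqdef]
      push_cast
      ring
    rw [this, ← key, mul_comm, mul_div_assoc, div_self hϕ, mul_one]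
  have htint : IsIntegral ℤ t := by
    rw [ht1]
    refine IsIntegral.sum _ fun μ h => IsIntegral.mul ?_ ?_
    · refine ⟨Polynomial.X ^ m - Polynomial.C 1, Polynomial.monic_X_pow_sub_C 1 hm.ne', ?_⟩
      simp [hroot μ h]
    · have : ((Module.finrank ℂ (f.maxGenEigenspace μ) : ℕ) : ℂ)
          = algebraMap ℤ ℂ (Module.finrank ℂ (f.maxGenEigenspace μ) : ℤ) := by
        push_cast
        simp
      rw [this]
      exact isIntegral_algebraMap
  have hq : IsIntegral ℤ q := by
    have halg : algebraMap ℚ ℂ q = (q : ℂ) := by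
      simp [eq_ratCast]
    rw [htq, ← halg] at htint
    exact (isIntegral_algebraMap_iff (algebraMap ℚ ℂ).injective).mp htint
  obtain ⟨y, hy⟩ := IsIntegrallyClosed.isIntegral_iff.mp hq
  refine ⟨y, ?_⟩
  rw [htq, ← hy]
  have : algebraMap ℤ ℚ y = (y : ℚ) := by simp
  rw [this]
  push_cast
  ring


lemma cycleType_pow_coprime {α : Type*} [Fintype α] [DecidableEq α] (σ : Equiv.Perm α) :
    ∀ k : ℕ, Nat.Coprime k (orderOf σ) → (σ ^ k).cycleType = σ.cycleType := by
  induction σ using Equiv.Perm.cycle_induction_on with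
  | base_one => simp
  | base_cycles σ hσ =>
    intro k hk
    have h2 : 2 ≤ σ.support.card := hσ.two_le_card_support
    have hord : orderOf σ = σ.support.card := hσ.orderOf
    have hnd : ¬ orderOf σ ∣ k := by
      intro hdvd
      have h1 : orderOf σ ∣ Nat.gcd k (orderOf σ) := Nat.dvd_gcd hdvd dvd_rfl
      rw [Nat.Coprime] at hk
      rw [hk] at h1
      have := Nat.le_of_dvd one_pos h1
      omega
    have hcyc : (σ ^ k).IsCycle := hσ.pow_iff.mpr hk
    have hsup : (σ ^ k).support = σ.support := hσ.support_pow_eq_iff.mpr hnd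
    rw [hcyc.cycleType, hsup, hσ.cycleType]
  | induction_disjoint σ τ hd hσc hσ hτ =>
    intro k hk
    rw [hd.orderOf] at hk
    have hkσ : Nat.Coprime k (orderOf σ) :=
      Nat.Coprime.coprime_dvd_right (Nat.dvd_lcm_left _ _) hk
    have hkτ : Nat.Coprime k (orderOf τ) :=
      Nat.Coprime.coprime_dvd_right (Nat.dvd_lcm_right _ _) hk
    rw [hd.commute.mul_pow]
    have hdk : (σ ^ k).Disjoint (τ ^ k) := by
      rw [Equiv.Perm.disjoint_iff_disjoint_support] at hd ⊢
      exact hd.mono (Equiv.Perm.support_pow_le σ k) (Equiv.Perm.support_pow_le τ k)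
    rw [hdk.cycleType_mul, hσ k hkσ, hτ k hkτ, hd.cycleType_mul]

lemma isConj_pow_coprime {n : ℕ} (x : Equiv.Perm (Fin n)) (k : ℕ)
    (hk : Nat.Coprime k (orderOf x)) : ∃ g, g * x * g⁻¹ = x ^ k := by
  have h : IsConj x (x ^ k) :=
    Equiv.Perm.isConj_iff_cycleType_eq.mpr (cycleType_pow_coprime x k hk).symm
  exact isConj_iff.mp h

variable {W : Type*} [AddCommGroup W] [Module ℂ W] [FiniteDimensional ℂ W]



lemma character_int_of_conj {G : Type} [Group G] (X : FDRep ℂ G) (x : G) (m : ℕ)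
    (hm : 0 < m) (hxm : x ^ m = 1)
    (hconj : ∀ k : ℕ, Nat.Coprime k m → ∃ g, g * x * g⁻¹ = x ^ k) :
    ∃ z : ℤ, X.character x = (z : ℂ) := by
  have h1 : (X.ρ x) ^ m = 1 := by rw [← map_pow, hxm, map_one]
  have h2 : ∀ k : ℕ, Nat.Coprime k m →
      LinearMap.trace ℂ X ((X.ρ x) ^ k) = LinearMap.trace ℂ X (X.ρ x) := by
    intro k hk
    obtain ⟨g, hg⟩ := hconj k hk
    have hch : X.character (x ^ k) = X.character x := by rw [← hg, FDRep.char_conj]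
    simpa only [FDRep.character, map_pow] using hch
  exact trace_int_of_conj_pow (X.ρ x) m hm h1 h2

end Aux


/-- If `x` is a picky `p`-element of `S_n` with unique Sylow `p`-subgroup `P`, then
all irreducible characters of `S_n` and of `N_{S_n}(P)` take integer values at `x`. -/
theorem int_valued_at_picky (p : ℕ) [Fact p.Prime] (n : ℕ) (hn : 1 ≤ n)
    (x : Equiv.Perm (Fin n)) (hpicky : IsPicky p x)
    (P : Sylow p (Equiv.Perm (Fin n))) (hx : x ∈ (P : Subgroup (Equiv.Perm (Fin n)))) :
    (∀ χ ∈ Irr (Equiv.Perm (Fin n)), ∃ m : ℤ, χ x = (m : ℂ)) ∧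
    (∀ ψ ∈ Irr ↥(Subgroup.normalizer ((P : Subgroup (Equiv.Perm (Fin n))) : Set (Equiv.Perm (Fin n)))),
      ∃ m : ℤ, ψ ⟨x, Subgroup.le_normalizer hx⟩ = (m : ℂ)) := by
  classical
  have hm : 0 < orderOf x := orderOf_pos x
  have hxm : x ^ orderOf x = 1 := pow_orderOf_eq_one x
  constructor
  · intro χ hχ
    obtain ⟨Vr, hsim, hchar⟩ := hχ
    rw [← hchar]
    exact character_int_of_conj Vr x (orderOf x) hm hxm
      (fun k hk => isConj_pow_coprime x k hk)
  · intro ψ hψ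
    obtain ⟨Vr, hsim, hchar⟩ := hψ
    rw [← hchar]
    refine character_int_of_conj Vr ⟨x, Subgroup.le_normalizer hx⟩ (orderOf x) hm ?_ ?_
    · apply Subtype.ext
      rw [SubmonoidClass.coe_pow, OneMemClass.coe_one]
      exact hxm
    · intro k hk
      obtain ⟨g, hg⟩ := isConj_pow_coprime x k hk
      obtain ⟨Q, hQmem, hQuniq⟩ := hpicky.2
      have hxin : x ^ k ∈ ((g • P : Sylow p (Equiv.Perm (Fin n))) :
          Subgroup (Equiv.Perm (Fin n))) := by
        have h1 := Subgroup.smul_mem_pointwise_smul x (MulAut.conj g)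
          (P : Subgroup (Equiv.Perm (Fin n))) hx
        rw [Sylow.coe_subgroup_smul]
        simpa [MulAut.smul_def, MulAut.conj_apply, hg] using h1
      have hxinP : x ∈ ((g • P : Sylow p (Equiv.Perm (Fin n))) :
          Subgroup (Equiv.Perm (Fin n))) := by
        have hphi : 1 ≤ (orderOf x).totient := Nat.totient_pos.mpr hm
        have hkk : k * k ^ ((orderOf x).totient - 1) = k ^ (orderOf x).totient := by
          rw [← pow_succ']
          congr 1
          omega
        have hmod : k ^ (orderOf x).totient % orderOf x = 1 % orderOf x :=
          Nat.ModEq.pow_totient hk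
        have hxpow : x ^ (k ^ (orderOf x).totient) = x := by
          conv_lhs => rw [← pow_mod_orderOf]
          rw [hmod, pow_mod_orderOf, pow_one]
        have hxx : (x ^ k) ^ (k ^ ((orderOf x).totient - 1)) = x := by
          rw [← pow_mul, hkk, hxpow]
        rw [← hxx]
        exact pow_mem hxin _
      have hgP : g • P = P := (hQuniq (g • P) hxinP).trans (hQuniq P hx).symm
      have hgN : g ∈ Subgroup.normalizer ((P : Subgroup (Equiv.Perm (Fin n))) : Set (Equiv.Perm (Fin n))) :=
        Sylow.smul_eq_iff_mem_normalizer.mp hgP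
      refine ⟨⟨g, hgN⟩, ?_⟩
      apply Subtype.ext
      rw [SubmonoidClass.coe_pow]
      exact hg

end
end
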